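/- arXiv:1702.04603 — 8 statements merged into one kernel-verified Lean document; each statement's English description precedes it below -/
import Mathlib

section
/- Let X be a type, R a ternary relation on X that is relationally associative, and Q a quantale. Then relational convolution is associative: (f ∗_R g) ∗_R h = f ∗_R (g ∗_R h) for all f, g, h : X → Q. -/
lemma iSup_mul_aux {Q : Type*} [CompleteLattice Q] [Mul Q]
    (hdistl : ∀ (A : Set Q) (b : Q), sSup A * b = ⨆ a ∈ A, a * b)
    {ι : Sort*} (a : ι → Q) (b : Q) : (⨆ i, a i) * b = ⨆ i, a i * b := by
  rw [iSup, hdistl, iSup_range]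

lemma mul_iSup_aux {Q : Type*} [CompleteLattice Q] [Mul Q]
    (hdistr : ∀ (a : Q) (B : Set Q), a * sSup B = ⨆ b ∈ B, a * b)
    {ι : Sort*} (a : Q) (b : ι → Q) : a * (⨆ i, b i) = ⨆ i, a * b i := by
  rw [iSup, hdistr, iSup_range]

/-- Relational convolution: `(f ∗_R g) x = ⨆ {f y * g z | R x y z}`. -/
def rconv {X Q : Type*} [CompleteLattice Q] [Mul Q]
    (R : X → X → X → Prop) (f g : X → Q) : X → Q :=
  fun x => ⨆ (y) (z) (_ : R x y z), f y * g z

theorem rconv_assoc {X Q : Type*} [CompleteLattice Q] [Mul Q]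
    (mul_assoc : ∀ a b c : Q, a * b * c = a * (b * c))
    (hdistl : ∀ (A : Set Q) (b : Q), sSup A * b = ⨆ a ∈ A, a * b)
    (hdistr : ∀ (a : Q) (B : Set Q), a * sSup B = ⨆ b ∈ B, a * b)
    (R : X → X → X → Prop)
    (rel_assoc : ∀ x u v w,
      (∃ y, R y u v ∧ R x y w) ↔ (∃ z, R z v w ∧ R x u z))
    (f g h : X → Q) :
    rconv R (rconv R f g) h = rconv R f (rconv R g h) := by
  funext x
  simp only [rconv, iSup_mul_aux hdistl, mul_iSup_aux hdistr]
  apply le_antisymm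
  · refine iSup_le fun y => iSup_le fun w => iSup_le fun hyw =>
      iSup_le fun u => iSup_le fun v => iSup_le fun huv => ?_
    obtain ⟨z, hzvw, hxuz⟩ := (rel_assoc x u v w).1 ⟨y, huv, hyw⟩
    exact le_iSup_of_le u (le_iSup_of_le z (le_iSup_of_le hxuz (le_iSup_of_le v
      (le_iSup_of_le w (le_iSup_of_le hzvw (mul_assoc (f u) (g v) (h w)).le)))))
  · refine iSup_le fun u => iSup_le fun z => iSup_le fun hxuz =>
      iSup_le fun v => iSup_le fun w => iSup_le fun hzvw => ?_
    obtain ⟨y, huv, hyw⟩ := (rel_assoc x u v w).2 ⟨z, hzvw, hxuz⟩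
    exact le_iSup_of_le y (le_iSup_of_le w (le_iSup_of_le hyw (le_iSup_of_le u
      (le_iSup_of_le v (le_iSup_of_le huv (mul_assoc (f u) (g v) (h w)).ge)))))
end

section
/- Let (X, R, ξ) be a relational monoid and Q a unital quantale. Define id : X → Q by id x = 1 if x ∈ ξ and id x = ⊥ otherwise. Then the function space X → Q, with the pointwise complete lattice structure and relational convolution ∗_R as multiplication, is a unital quantale: ∗_R is associative; id ∗_R f = f = f ∗_R id for all f : X → Q; and (⨆_{f ∈ F} f) ∗_R g = ⨆_{f ∈ F} (f ∗_R g) and f ∗_R (⨆_{g ∈ G} g) = ⨆_{g ∈ G} (f ∗_R g) for all sets F, G of functions X → Q. -/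
open scoped Classical

private lemma aux_iSup_mul {Q : Type*} [CompleteLattice Q] [Mul Q]
    (hdistl : ∀ (A : Set Q) (b : Q), sSup A * b = ⨆ a ∈ A, a * b)
    {ι : Sort*} (f : ι → Q) (a : Q) : (⨆ i, f i) * a = ⨆ i, f i * a := by
  rw [← sSup_range, hdistl]; exact iSup_range

private lemma aux_mul_iSup {Q : Type*} [CompleteLattice Q] [Mul Q]
    (hdistr : ∀ (a : Q) (B : Set Q), a * sSup B = ⨆ b ∈ B, a * b)
    {ι : Sort*} (a : Q) (f : ι → Q) : a * (⨆ i, f i) = ⨆ i, a * f i := by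
  rw [← sSup_range, hdistr]; exact iSup_range

private lemma aux_conv_mul {X Q : Type*} [CompleteLattice Q] [Mul Q]
    (hdistl : ∀ (A : Set Q) (b : Q), sSup A * b = ⨆ a ∈ A, a * b)
    (R : X → X → X → Prop) (f g : X → Q) (y : X) (a : Q) :
    rconv R f g y * a = ⨆ u, ⨆ v, ⨆ _ : R y u v, f u * g v * a :=
  calc rconv R f g y * a
      = ⨆ u, (⨆ v, ⨆ _ : R y u v, f u * g v) * a := aux_iSup_mul hdistl _ _
    _ = ⨆ u, ⨆ v, (⨆ _ : R y u v, f u * g v) * a :=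
        iSup_congr fun u => aux_iSup_mul hdistl _ _
    _ = ⨆ u, ⨆ v, ⨆ _ : R y u v, f u * g v * a :=
        iSup_congr fun u => iSup_congr fun v => aux_iSup_mul hdistl _ _

private lemma aux_mul_conv {X Q : Type*} [CompleteLattice Q] [Mul Q]
    (hdistr : ∀ (a : Q) (B : Set Q), a * sSup B = ⨆ b ∈ B, a * b)
    (R : X → X → X → Prop) (g h : X → Q) (z : X) (a : Q) :
    a * rconv R g h z = ⨆ v, ⨆ w, ⨆ _ : R z v w, a * (g v * h w) :=
  calc a * rconv R g h z
      = ⨆ v, a * (⨆ w, ⨆ _ : R z v w, g v * h w) := aux_mul_iSup hdistr _ _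
    _ = ⨆ v, ⨆ w, a * (⨆ _ : R z v w, g v * h w) :=
        iSup_congr fun v => aux_mul_iSup hdistr _ _
    _ = ⨆ v, ⨆ w, ⨆ _ : R z v w, a * (g v * h w) :=
        iSup_congr fun v => iSup_congr fun w => aux_mul_iSup hdistr _ _

theorem rel_monoid_lifting {X Q : Type*} [CompleteLattice Q] [Mul Q] [One Q]
    (mul_assoc : ∀ a b c : Q, a * b * c = a * (b * c))
    (one_mul : ∀ a : Q, 1 * a = a) (mul_one : ∀ a : Q, a * 1 = a)
    (hdistl : ∀ (A : Set Q) (b : Q), sSup A * b = ⨆ a ∈ A, a * b)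
    (hdistr : ∀ (a : Q) (B : Set Q), a * sSup B = ⨆ b ∈ B, a * b)
    (R : X → X → X → Prop) (ξ : Set X)
    (rel_assoc : ∀ x u v w,
      (∃ y, R y u v ∧ R x y w) ↔ (∃ z, R z v w ∧ R x u z))
    (hul : ∀ x, ∃ e ∈ ξ, R x e x) (hur : ∀ x, ∃ e ∈ ξ, R x x e)
    (hcl : ∀ x y, ∀ e ∈ ξ, R x e y → x = y)
    (hcr : ∀ x y, ∀ e ∈ ξ, R x y e → x = y) :
    (∀ f g h : X → Q, rconv R (rconv R f g) h = rconv R f (rconv R g h)) ∧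
    (∀ f : X → Q,
      rconv R (fun x => if x ∈ ξ then (1 : Q) else ⊥) f = f ∧
      rconv R f (fun x => if x ∈ ξ then (1 : Q) else ⊥) = f) ∧
    (∀ (F : Set (X → Q)) (g : X → Q), rconv R (sSup F) g = ⨆ f ∈ F, rconv R f g) ∧
    (∀ (f : X → Q) (G : Set (X → Q)), rconv R f (sSup G) = ⨆ g ∈ G, rconv R f g) := by
  classical
  have hbot_mul : ∀ a : Q, (⊥ : Q) * a = ⊥ := fun a => by simpa using hdistl ∅ a
  have hmul_bot : ∀ a : Q, a * (⊥ : Q) = ⊥ := fun a => by simpa using hdistr a ∅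
  have hmono_r : ∀ (a : Q) {b c : Q}, b ≤ c → a * b ≤ a * c := by
    intro a b c hbc
    have h1 : a * b ≤ ⨆ x ∈ ({b, c} : Set Q), a * x := le_biSup _ (Set.mem_insert _ _)
    rw [← hdistr] at h1
    simpa [sSup_pair, sup_eq_right.mpr hbc] using h1
  have hmono_l : ∀ {b c : Q} (a : Q), b ≤ c → b * a ≤ c * a := by
    intro b c a hbc
    have h1 : b * a ≤ ⨆ x ∈ ({b, c} : Set Q), x * a :=
      le_biSup (fun x => x * a) (Set.mem_insert _ _)
    rw [← hdistl] at h1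
    simpa [sSup_pair, sup_eq_right.mpr hbc] using h1
  refine ⟨?_, ?_, ?_, ?_⟩
  · intro f g h
    funext x
    apply le_antisymm
    · refine iSup_le fun y => iSup_le fun w => iSup_le fun hxyw => ?_
      rw [aux_conv_mul hdistl]
      refine iSup_le fun u => iSup_le fun v => iSup_le fun hyuv => ?_
      obtain ⟨z, hzvw, hxuz⟩ := (rel_assoc x u v w).1 ⟨y, hyuv, hxyw⟩
      rw [mul_assoc]
      have h2 : g v * h w ≤ rconv R g h z :=
        le_iSup_of_le v (le_iSup_of_le w (le_iSup_of_le hzvw le_rfl))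
      exact le_iSup_of_le u (le_iSup_of_le z (le_iSup_of_le hxuz (hmono_r _ h2)))
    · refine iSup_le fun u => iSup_le fun z => iSup_le fun hxuz => ?_
      rw [aux_mul_conv hdistr]
      refine iSup_le fun v => iSup_le fun w => iSup_le fun hzvw => ?_
      obtain ⟨y, hyuv, hxyw⟩ := (rel_assoc x u v w).2 ⟨z, hzvw, hxuz⟩
      rw [← mul_assoc]
      have h2 : f u * g v ≤ rconv R f g y :=
        le_iSup_of_le u (le_iSup_of_le v (le_iSup_of_le hyuv le_rfl))
      exact le_iSup_of_le y (le_iSup_of_le w (le_iSup_of_le hxyw (hmono_l _ h2)))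
  · intro f
    constructor
    · funext x
      apply le_antisymm
      · refine iSup_le fun e => iSup_le fun z => iSup_le fun hR => ?_
        by_cases he : e ∈ ξ
        · simp only [if_pos he, one_mul, hcl x z e he hR]; exact le_rfl
        · simp only [if_neg he, hbot_mul]; exact bot_le
      · obtain ⟨e, he, hR⟩ := hul x
        have h1 : f x = (if e ∈ ξ then (1 : Q) else ⊥) * f x := by
          rw [if_pos he, one_mul]
        rw [h1]
        exact le_iSup_of_le e (le_iSup_of_le x (le_iSup_of_le hR le_rfl))
    · funext x
      apply le_antisymm
      · refine iSup_le fun z => iSup_le fun e => iSup_le fun hR => ?_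
        by_cases he : e ∈ ξ
        · simp only [if_pos he, mul_one, hcr x z e he hR]; exact le_rfl
        · simp only [if_neg he, hmul_bot]; exact bot_le
      · obtain ⟨e, he, hR⟩ := hur x
        have h1 : f x = f x * (if e ∈ ξ then (1 : Q) else ⊥) := by
          rw [if_pos he, mul_one]
        rw [h1]
        exact le_iSup_of_le x (le_iSup_of_le e (le_iSup_of_le hR le_rfl))
  · intro F g
    funext x
    simp only [iSup_apply]
    apply le_antisymm
    · refine iSup_le fun y => iSup_le fun z => iSup_le fun hR => ?_
      rw [show (sSup F) y * g z = ⨆ f : F, (f : X → Q) y * g z by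
        rw [sSup_apply, aux_iSup_mul hdistl]]
      refine iSup_le fun f => ?_
      exact le_iSup_of_le f.1 (le_iSup_of_le f.2
        (le_iSup_of_le y (le_iSup_of_le z (le_iSup_of_le hR le_rfl))))
    · refine iSup_le fun f => iSup_le fun hf => ?_
      refine iSup_le fun y => iSup_le fun z => iSup_le fun hR => ?_
      have h1 : f y ≤ (sSup F) y := by
        rw [sSup_apply]; exact le_iSup_of_le ⟨f, hf⟩ le_rfl
      exact le_iSup_of_le y (le_iSup_of_le z (le_iSup_of_le hR (hmono_l _ h1)))
  · intro f G
    funext x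
    simp only [iSup_apply]
    apply le_antisymm
    · refine iSup_le fun y => iSup_le fun z => iSup_le fun hR => ?_
      rw [show f y * (sSup G) z = ⨆ g : G, f y * (g : X → Q) z by
        rw [sSup_apply, aux_mul_iSup hdistr]]
      refine iSup_le fun g => ?_
      exact le_iSup_of_le g.1 (le_iSup_of_le g.2
        (le_iSup_of_le y (le_iSup_of_le z (le_iSup_of_le hR le_rfl))))
    · refine iSup_le fun g => iSup_le fun hg => ?_
      refine iSup_le fun y => iSup_le fun z => iSup_le fun hR => ?_
      have h1 : g z ≤ (sSup G) z := by
        rw [sSup_apply]; exact le_iSup_of_le ⟨g, hg⟩ le_rfl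
      exact le_iSup_of_le y (le_iSup_of_le z (le_iSup_of_le hR (hmono_r _ h1)))
end

section
/- Let R be a ternary relation on X satisfying the relational commutativity law: R x y z → R x z y for all x, y, z, and let Q be a quantale whose multiplication is commutative. Then relational convolution is commutative: f ∗_R g = g ∗_R f for all f, g : X → Q. -/
theorem rconv_comm {X Q : Type*} [CompleteLattice Q] [Mul Q]
    (mul_assoc : ∀ a b c : Q, a * b * c = a * (b * c))
    (mul_comm : ∀ a b : Q, a * b = b * a)
    (hdistl : ∀ (A : Set Q) (b : Q), sSup A * b = ⨆ a ∈ A, a * b)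
    (hdistr : ∀ (a : Q) (B : Set Q), a * sSup B = ⨆ b ∈ B, a * b)
    (R : X → X → X → Prop)
    (rel_comm : ∀ x y z, R x y z → R x z y)
    (f g : X → Q) :
    rconv R f g = rconv R g f := by
  funext x
  apply le_antisymm <;>
  · refine iSup_le fun y => iSup_le fun z => iSup_le fun h => ?_
    rw [mul_comm]
    exact le_iSup_of_le z (le_iSup_of_le y (le_iSup_of_le (rel_comm x y z h) le_rfl))
end

section
/- Let (S, ·, D) be a partial semigroup and define the ternary relation R on S by R x y z ↔ D y z ∧ x = y · z. Then R is relationally associative, i.e. (S, R) is a relational semigroup. If moreover (S, ·, D, E) is a partial monoid, then (S, R, E) is a relational monoid. -/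
/-- Partial semigroup axioms for a binary operation `mul` with domain of definition `D`. -/
def IsPartialSemigroup {S : Type*} (mul : S → S → S) (D : S → S → Prop) : Prop :=
  (∀ x y z : S, (D y z ∧ D x (mul y z)) ↔ (D x y ∧ D (mul x y) z)) ∧
  (∀ x y z : S, D x y → D (mul x y) z → mul (mul x y) z = mul x (mul y z))

/-- Partial monoid axioms. -/
def IsPartialMonoid {S : Type*} (mul : S → S → S) (D : S → S → Prop) (E : Set S) : Prop :=
  IsPartialSemigroup mul D ∧
  (∀ x : S, ∃ e ∈ E, D e x ∧ mul e x = x) ∧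
  (∀ x : S, ∃ e ∈ E, D x e ∧ mul x e = x) ∧
  (∀ e₁ ∈ E, ∀ e₂ ∈ E, D e₁ e₂ → e₁ = e₂)

/-- Relational associativity of a ternary relation. -/
def RelAssoc {S : Type*} (R : S → S → S → Prop) : Prop :=
  ∀ x u v w : S, (∃ y, R y u v ∧ R x y w) ↔ (∃ z, R z v w ∧ R x u z)

/-- Relational monoid axioms for a ternary relation `R` with unit set `ξ`. -/
def IsRelMonoid {S : Type*} (R : S → S → S → Prop) (ξ : Set S) : Prop :=
  RelAssoc R ∧
  (∀ x : S, ∃ e ∈ ξ, R x e x) ∧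
  (∀ x : S, ∃ e ∈ ξ, R x x e) ∧
  (∀ x y : S, ∀ e ∈ ξ, R x e y → x = y) ∧
  (∀ x y : S, ∀ e ∈ ξ, R x y e → x = y)

theorem partial_semigroup_to_relational {S : Type*}
    (mul : S → S → S) (D : S → S → Prop) (E : Set S)
    (hsg : IsPartialSemigroup mul D) :
    RelAssoc (fun x y z => D y z ∧ x = mul y z) ∧
    (IsPartialMonoid mul D E →
      IsRelMonoid (fun x y z => D y z ∧ x = mul y z) E) := by
  obtain ⟨hD, hA⟩ := hsg
  have hassoc : RelAssoc (fun x y z => D y z ∧ x = mul y z) := by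
    intro x u v w
    constructor
    · rintro ⟨y, ⟨huv, rfl⟩, hyw, rfl⟩
      have h := (hD u v w).mpr ⟨huv, hyw⟩
      exact ⟨mul v w, ⟨h.1, rfl⟩, h.2, hA u v w huv hyw⟩
    · rintro ⟨z, ⟨hvw, rfl⟩, huz, rfl⟩
      have h := (hD u v w).mp ⟨hvw, huz⟩
      exact ⟨mul u v, ⟨h.1, rfl⟩, ⟨h.2, (hA u v w h.1 h.2).symm⟩⟩
  refine ⟨hassoc, ?_⟩
  rintro ⟨_, hL, hR, huniq⟩
  refine ⟨hassoc, ?_, ?_, ?_, ?_⟩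
  · intro x
    obtain ⟨e, he, hd, hm⟩ := hL x
    exact ⟨e, he, hd, hm.symm⟩
  · intro x
    obtain ⟨e, he, hd, hm⟩ := hR x
    exact ⟨e, he, hd, hm.symm⟩
  · rintro x y e he ⟨hd, rfl⟩
    obtain ⟨e', he', hd', hm'⟩ := hL y
    have : D e e' ∧ D (mul e e') y := (hD e e' y).mp ⟨hd', by rwa [hm']⟩
    have hee : e = e' := huniq e he e' he' this.1
    rw [hee, hm']
  · rintro x y e he ⟨hd, rfl⟩
    obtain ⟨e', he', hd', hm'⟩ := hR y
    have : D e' e ∧ D y (mul e' e) := (hD y e' e).mpr ⟨hd', by rwa [hm']⟩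
    have hee : e' = e := huniq e' he' e he this.1
    rw [← hee, hm']
end

section
/- Let (S, ⊙, D_⊙) and (T, ⊕, D_⊕) be partial semigroups, and let ∘ with domain D_∘ : S → T → Prop be a left action of S on T, i.e.: (D_⊙ s₁ s₂ ∧ D_∘ (s₁ ⊙ s₂) t) ↔ (D_∘ s₂ t ∧ D_∘ s₁ (s₂ ∘ t)); D_⊙ s₁ s₂ ∧ D_∘ (s₁ ⊙ s₂) t → s₁ ∘ (s₂ ∘ t) = (s₁ ⊙ s₂) ∘ t; (D_⊕ t₁ t₂ ∧ D_∘ s (t₁ ⊕ t₂)) ↔ (D_∘ s t₁ ∧ D_∘ s t₂ ∧ D_⊕ (s ∘ t₁) (s ∘ t₂)); and D_⊕ t₁ t₂ ∧ D_∘ s (t₁ ⊕ t₂) → (s ∘ t₁) ⊕ (s ∘ t₂) = s ∘ (t₁ ⊕ t₂). Define on S × T: D_⋉ (s₁, t₁) (s₂, t₂) ↔ D_⊙ s₁ s₂ ∧ D_∘ s₁ t₂ ∧ D_⊕ t₁ (s₁ ∘ t₂), and (s₁, t₁) ⋉ (s₂, t₂) = (s₁ ⊙ s₂, t₁ ⊕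 (s₁ ∘ t₂)). Then (S × T, ⋉, D_⋉) is a partial semigroup. If moreover S and T are partial monoids with unit sets E_⊙ and E_⊕, and the action satisfies e ∈ E_⊙ → D_∘ e t ∧ e ∘ t = t for all t, and e ∈ E_⊕ → D_∘ s e ∧ s ∘ e = e for all s, then (S × T, ⋉, D_⋉, E_⊙ × E_⊕) is a partial monoid. -/
/-- Semidirect product composition. -/
def sdMul {S T : Type*} (smul : S → S → S) (tmul : T → T → T) (act : S → T → T)
    (p q : S × T) : S × T :=
  (smul p.1 q.1, tmul p.2 (act p.1 q.2))

/-- Domain of definition of the semidirect product composition. -/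
def sdD {S T : Type*} (Ds : S → S → Prop) (Dt : T → T → Prop) (Da : S → T → Prop)
    (act : S → T → T) (p q : S × T) : Prop :=
  Ds p.1 q.1 ∧ Da p.1 q.2 ∧ Dt p.2 (act p.1 q.2)

theorem semidirect_product_partial_semigroup {S T : Type*}
    (smul : S → S → S) (Ds : S → S → Prop)
    (tmul : T → T → T) (Dt : T → T → Prop)
    (act : S → T → T) (Da : S → T → Prop)
    (hS : IsPartialSemigroup smul Ds) (hT : IsPartialSemigroup tmul Dt)
    (ha1 : ∀ s₁ s₂ t, (Ds s₁ s₂ ∧ Da (smul s₁ s₂) t) ↔ (Da s₂ t ∧ Da s₁ (act s₂ t)))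
    (ha2 : ∀ s₁ s₂ t, Ds s₁ s₂ → Da (smul s₁ s₂) t →
      act s₁ (act s₂ t) = act (smul s₁ s₂) t)
    (ha3 : ∀ s t₁ t₂, (Dt t₁ t₂ ∧ Da s (tmul t₁ t₂)) ↔
      (Da s t₁ ∧ Da s t₂ ∧ Dt (act s t₁) (act s t₂)))
    (ha4 : ∀ s t₁ t₂, Dt t₁ t₂ → Da s (tmul t₁ t₂) →
      tmul (act s t₁) (act s t₂) = act s (tmul t₁ t₂)) :
    IsPartialSemigroup (sdMul smul tmul act) (sdD Ds Dt Da act) ∧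
    (∀ (Es : Set S) (Et : Set T),
      IsPartialMonoid smul Ds Es → IsPartialMonoid tmul Dt Et →
      (∀ e ∈ Es, ∀ t : T, Da e t ∧ act e t = t) →
      (∀ e ∈ Et, ∀ s : S, Da s e ∧ act s e = e) →
      IsPartialMonoid (sdMul smul tmul act) (sdD Ds Dt Da act) (Es ×ˢ Et)) := by

  obtain ⟨hSiff, hSassoc⟩ := hS
  obtain ⟨hTiff, hTassoc⟩ := hT
  have hsg : IsPartialSemigroup (sdMul smul tmul act) (sdD Ds Dt Da act) := by
    constructor
    · rintro ⟨s₁, t₁⟩ ⟨s₂, t₂⟩ ⟨s₃, t₃⟩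
      simp only [sdD, sdMul]
      constructor
      · rintro ⟨⟨A, B, C⟩, D1, E1, F⟩
        obtain ⟨G, H⟩ := (hSiff s₁ s₂ s₃).mp ⟨A, D1⟩
        obtain ⟨I, J, K⟩ := (ha3 s₁ t₂ (act s₂ t₃)).mp ⟨C, E1⟩
        have L : Da (smul s₁ s₂) t₃ := ((ha1 s₁ s₂ t₃).mpr ⟨B, J⟩).2
        have heq : act s₁ (act s₂ t₃) = act (smul s₁ s₂) t₃ := ha2 s₁ s₂ t₃ G L
        have heq2 : tmul (act s₁ t₂) (act s₁ (act s₂ t₃)) =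
            act s₁ (tmul t₂ (act s₂ t₃)) := ha4 s₁ t₂ (act s₂ t₃) C E1
        have F' : Dt t₁ (tmul (act s₁ t₂) (act s₁ (act s₂ t₃))) := heq2.symm ▸ F
        obtain ⟨M, N⟩ := (hTiff t₁ (act s₁ t₂) (act s₁ (act s₂ t₃))).mp ⟨K, F'⟩
        exact ⟨⟨G, I, M⟩, H, L, heq ▸ N⟩
      · rintro ⟨⟨G, I, M⟩, H, L, N⟩
        obtain ⟨A, D1⟩ := (hSiff s₁ s₂ s₃).mpr ⟨G, H⟩
        obtain ⟨B, J⟩ := (ha1 s₁ s₂ t₃).mp ⟨G, L⟩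
        have heq : act s₁ (act s₂ t₃) = act (smul s₁ s₂) t₃ := ha2 s₁ s₂ t₃ G L
        have N' : Dt (tmul t₁ (act s₁ t₂)) (act s₁ (act s₂ t₃)) := heq.symm ▸ N
        obtain ⟨K, F'⟩ := (hTiff t₁ (act s₁ t₂) (act s₁ (act s₂ t₃))).mpr ⟨M, N'⟩
        obtain ⟨C, E1⟩ := (ha3 s₁ t₂ (act s₂ t₃)).mpr ⟨I, J, K⟩
        have heq2 : tmul (act s₁ t₂) (act s₁ (act s₂ t₃)) =
            act s₁ (tmul t₂ (act s₂ t₃)) := ha4 s₁ t₂ (act s₂ t₃) C E1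
        exact ⟨⟨A, B, C⟩, D1, E1, heq2 ▸ F'⟩
    · rintro ⟨s₁, t₁⟩ ⟨s₂, t₂⟩ ⟨s₃, t₃⟩ ⟨G, I, M⟩ ⟨H, L, N⟩
      simp only [sdD, sdMul] at *
      have heq : act s₁ (act s₂ t₃) = act (smul s₁ s₂) t₃ := ha2 s₁ s₂ t₃ G L
      obtain ⟨B, J⟩ := (ha1 s₁ s₂ t₃).mp ⟨G, L⟩
      have N' : Dt (tmul t₁ (act s₁ t₂)) (act s₁ (act s₂ t₃)) := heq.symm ▸ N
      obtain ⟨K, F'⟩ := (hTiff t₁ (act s₁ t₂) (act s₁ (act s₂ t₃))).mpr ⟨M, N'⟩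
      obtain ⟨C, E1⟩ := (ha3 s₁ t₂ (act s₂ t₃)).mpr ⟨I, J, K⟩
      have heq2 : tmul (act s₁ t₂) (act s₁ (act s₂ t₃)) =
          act s₁ (tmul t₂ (act s₂ t₃)) := ha4 s₁ t₂ (act s₂ t₃) C E1
      refine Prod.ext (hSassoc s₁ s₂ s₃ G H) ?_
      show tmul (tmul t₁ (act s₁ t₂)) (act (smul s₁ s₂) t₃) =
        tmul t₁ (act s₁ (tmul t₂ (act s₂ t₃)))
      rw [← heq, hTassoc t₁ (act s₁ t₂) (act s₁ (act s₂ t₃)) M N', heq2]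
  refine ⟨hsg, ?_⟩
  intro Es Et hMS hMT hactS hactT
  obtain ⟨_, hSl, hSr, hSu⟩ := hMS
  obtain ⟨_, hTl, hTr, hTu⟩ := hMT
  refine ⟨hsg, ?_, ?_, ?_⟩
  · rintro ⟨s, t⟩
    obtain ⟨es, hes, hDs, hmul⟩ := hSl s
    obtain ⟨et, het, hDt, htmul⟩ := hTl t
    refine ⟨(es, et), Set.mk_mem_prod hes het, ⟨hDs, (hactS es hes t).1, ?_⟩, ?_⟩
    · rw [(hactS es hes t).2]; exact hDt
    · show (smul es s, tmul et (act es t)) = (s, t)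
      rw [hmul, (hactS es hes t).2, htmul]
  · rintro ⟨s, t⟩
    obtain ⟨es, hes, hDs, hmul⟩ := hSr s
    obtain ⟨et, het, hDt, htmul⟩ := hTr t
    refine ⟨(es, et), Set.mk_mem_prod hes het, ⟨hDs, (hactT et het s).1, ?_⟩, ?_⟩
    · rw [(hactT et het s).2]; exact hDt
    · show (smul s es, tmul t (act s et)) = (s, t)
      rw [hmul, (hactT et het s).2, htmul]
  · rintro ⟨e, f⟩ ⟨he, hf⟩ ⟨e', f'⟩ ⟨he', hf'⟩ ⟨h1, h2, h3⟩
    rw [(hactS e he f').2] at h3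
    exact Prod.ext (hSu e he e' he' h1) (hTu f hf f' hf' h3)
end

section
/- Let Q be a quantale, L a complete lattice, and ∘ : Q → L → L a quantale module action, i.e. (u * v) ∘ x = u ∘ (v ∘ x), (⨆ V) ∘ x = ⨆ {v ∘ x | v ∈ V} and u ∘ (⨆ X) = ⨆ {u ∘ x | x ∈ X} for all u, v ∈ Q, x ∈ L, V ⊆ Q, X ⊆ L. Define on Q × L (with the product complete lattice structure) the operation (u, x) ⋉ (v, y) = (u * v, x ⊔ u ∘ y). Then: (1) ⋉ is associative; (2) (⨆ A) ⋉ p = ⨆ {a ⋉ p | a ∈ A} for every subset A ⊆ Q × L and p ∈ Q × L; (3) p ⋉ (⨆ B) = ⨆ {p ⋉ b | b ∈ B} for every nonempty subset B ⊆ Q × L; and (4) if Q is unital with unit 1 and 1 ∘ x = x for all x ∈ L, then (1, ⊥) is a two-sided unit for ⋉. That is, Q ⋉ L is a weak (unital) quantale. -/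
/-- Semidirect composition on `Q × L`: `(u, x) ⋉ (v, y) = (u * v, x ⊔ u ∘ y)`. -/
def sd {Q L : Type*} [Mul Q] [Lattice L] (act : Q → L → L) (p q : Q × L) : Q × L :=
  (p.1 * q.1, p.2 ⊔ act p.1 q.2)

theorem quantale_module_semidirect {Q L : Type*}
    [CompleteLattice Q] [Mul Q] [One Q] [CompleteLattice L]
    (mul_assoc : ∀ a b c : Q, a * b * c = a * (b * c))
    (hdistl : ∀ (A : Set Q) (b : Q), sSup A * b = ⨆ a ∈ A, a * b)
    (hdistr : ∀ (a : Q) (B : Set Q), a * sSup B = ⨆ b ∈ B, a * b)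
    (act : Q → L → L)
    (hact_assoc : ∀ (u v : Q) (x : L), act (u * v) x = act u (act v x))
    (hact_sup₁ : ∀ (V : Set Q) (x : L), act (sSup V) x = ⨆ v ∈ V, act v x)
    (hact_sup₂ : ∀ (u : Q) (X : Set L), act u (sSup X) = ⨆ x ∈ X, act u x) :
    (∀ p q r : Q × L, sd act (sd act p q) r = sd act p (sd act q r)) ∧
    (∀ (A : Set (Q × L)) (p : Q × L), sd act (sSup A) p = ⨆ a ∈ A, sd act a p) ∧
    (∀ (p : Q × L) (B : Set (Q × L)), B.Nonempty →
      sd act p (sSup B) = ⨆ b ∈ B, sd act p b) ∧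
    ((∀ a : Q, 1 * a = a) → (∀ a : Q, a * 1 = a) → (∀ x : L, act 1 x = x) →
      ∀ p : Q × L, sd act ((1 : Q), (⊥ : L)) p = p ∧ sd act p ((1 : Q), (⊥ : L)) = p) := by
  -- monotone-ish fact: act u distributes over binary sup
  have hact_sup2 : ∀ (u : Q) (x y : L), act u (x ⊔ y) = act u x ⊔ act u y := by
    intro u x y
    rw [← sSup_pair, hact_sup₂ u {x, y}, iSup_pair]
  refine ⟨?_, ?_, ?_, ?_⟩
  · intro p q r
    simp only [sd, Prod.mk.injEq, mul_assoc, hact_assoc, hact_sup2, sup_assoc]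

  · intro A p
    apply Prod.ext
    · simp only [sd, Prod.fst_sSup, Prod.fst_iSup, hdistl]
      rw [iSup_image]
    · simp only [sd, Prod.snd_sSup, Prod.fst_sSup, Prod.snd_iSup, hact_sup₁]
      rw [sSup_image, iSup_image, iSup_subtype', iSup_subtype', iSup_subtype',
        ← iSup_sup_eq]
  · intro p B hB
    apply Prod.ext
    · simp only [sd, Prod.fst_sSup, Prod.fst_iSup, hdistr]
      rw [iSup_image]
    · simp only [sd, Prod.snd_sSup, Prod.snd_iSup, hact_sup₂]
      rw [iSup_image]
      have : Nonempty B := hB.to_subtype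
      rw [iSup_subtype', iSup_subtype', sup_iSup]
  · intro h1 h2 h3 p
    constructor
    · simp [sd, h1, h3]
    · have hbot : act p.1 ⊥ = ⊥ := by
        simpa using hact_sup₂ p.1 ∅
      simp [sd, h2, hbot]
end

section
/- Let Q be a weak quantale: a complete lattice with an associative multiplication satisfying (⨆ A) * y = ⨆ {a * y | a ∈ A} for all A ⊆ Q, and x * (⨆ B) = ⨆ {x * b | b ∈ B} for all nonempty B ⊆ Q. Let (M, ·, D, E) be a partial monoid and define convolution of f, g : M → Q by (f ∗ g) x = ⨆ {f y * g z | D y z ∧ x = y · z}. Then: (1) ∗ is associative; (2) (⨆_{f ∈ F} f) ∗ g = ⨆_{f ∈ F} (f ∗ g) for every set F of functions, and f ∗ (⨆_{g ∈ G} g) = ⨆_{g ∈ G} (f ∗ g) for every nonempty set G of functions; (3) if moreover Q has a multiplicative unit 1, then id : M → Q defined by id x = 1 if x ∈ E and ⊥ otherwise is a left unit: id ∗ f = f for all f. -/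
open scoped Classical

/-- Convolution of functions from a partial monoid into a (weak) quantale:
`(f ∗ g) x = ⨆ {f y * g z | D y z ∧ x = y · z}`. -/
def pconv {M Q : Type*} [CompleteLattice Q] [Mul Q]
    (mul : M → M → M) (D : M → M → Prop) (f g : M → Q) : M → Q :=
  fun x => ⨆ (y) (z) (_ : D y z ∧ x = mul y z), f y * g z

private lemma distl_aux {Q : Type*} [CompleteLattice Q] [Mul Q]
    (hdistl : ∀ (A : Set Q) (b : Q), sSup A * b = ⨆ a ∈ A, a * b)
    {ι : Sort*} (f : ι → Q) (b : Q) : (⨆ i, f i) * b = ⨆ i, f i * b := by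
  have h := hdistl (Set.range f) b
  rw [sSup_range] at h
  rw [h, iSup_range]

private lemma distr_aux {Q : Type*} [CompleteLattice Q] [Mul Q]
    (hdistr : ∀ (a : Q) (B : Set Q), B.Nonempty → a * sSup B = ⨆ b ∈ B, a * b)
    {ι : Sort*} [Nonempty ι] (a : Q) (f : ι → Q) : a * (⨆ i, f i) = ⨆ i, a * f i := by
  have h := hdistr a (Set.range f) (Set.range_nonempty f)
  rw [sSup_range] at h
  rw [h, iSup_range]

theorem weak_quantale_lifting {M Q : Type*} [CompleteLattice Q] [Mul Q] [One Q]
    (mul_assoc : ∀ a b c : Q, a * b * c = a * (b * c))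
    (hdistl : ∀ (A : Set Q) (b : Q), sSup A * b = ⨆ a ∈ A, a * b)
    (hdistr : ∀ (a : Q) (B : Set Q), B.Nonempty → a * sSup B = ⨆ b ∈ B, a * b)
    (mul : M → M → M) (D : M → M → Prop) (E : Set M)
    (hM : IsPartialMonoid mul D E) :
    (∀ f g h : M → Q,
      pconv mul D (pconv mul D f g) h = pconv mul D f (pconv mul D g h)) ∧
    (∀ (F : Set (M → Q)) (g : M → Q),
      pconv mul D (sSup F) g = ⨆ f ∈ F, pconv mul D f g) ∧
    (∀ (f : M → Q) (G : Set (M → Q)), G.Nonempty →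
      pconv mul D f (sSup G) = ⨆ g ∈ G, pconv mul D f g) ∧
    ((∀ a : Q, 1 * a = a) → (∀ a : Q, a * 1 = a) →
      ∀ f : M → Q, pconv mul D (fun x => if x ∈ E then (1 : Q) else ⊥) f = f) := by
  obtain ⟨⟨hiff, hassocM⟩, hlu, hru, hEu⟩ := hM
  have botmul : ∀ b : Q, (⊥ : Q) * b = ⊥ := by
    intro b
    have h := hdistl ∅ b
    simpa using h
  have hne : ∀ z : M, ∃ u v, D u v ∧ z = mul u v := by
    intro z
    obtain ⟨e, _, hD, hm⟩ := hru z
    exact ⟨z, e, hD, hm.symm⟩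
  have pack : ∀ (k : M → M → Q) (z : M),
      (⨆ u, ⨆ v, ⨆ (_ : D u v ∧ z = mul u v), k u v)
        = ⨆ p : {p : M × M // D p.1 p.2 ∧ z = mul p.1 p.2}, k p.1.1 p.1.2 := by
    intro k z
    apply le_antisymm
    · refine iSup_le fun u => iSup_le fun v => iSup_le fun h => ?_
      exact le_iSup (fun p : {p : M × M // D p.1 p.2 ∧ z = mul p.1 p.2} => k p.1.1 p.1.2)
        ⟨(u, v), h⟩
    · refine iSup_le fun p => ?_
      exact le_iSup_of_le p.1.1 (le_iSup_of_le p.1.2 (le_iSup_of_le p.2 le_rfl))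
  have key : ∀ (a : Q) (k : M → M → Q) (z : M),
      a * (⨆ u, ⨆ v, ⨆ (_ : D u v ∧ z = mul u v), k u v)
        = ⨆ u, ⨆ v, ⨆ (_ : D u v ∧ z = mul u v), a * k u v := by
    intro a k z
    have hT : Nonempty {p : M × M // D p.1 p.2 ∧ z = mul p.1 p.2} := by
      obtain ⟨u, v, h⟩ := hne z
      exact ⟨⟨(u, v), h⟩⟩
    rw [pack k z, distr_aux hdistr, ← pack (fun u v => a * k u v) z]
  have keyl : ∀ (b : Q) (k : M → M → Q) (z : M),
      (⨆ u, ⨆ v, ⨆ (_ : D u v ∧ z = mul u v), k u v) * b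
        = ⨆ u, ⨆ v, ⨆ (_ : D u v ∧ z = mul u v), k u v * b := by
    intro b k z
    rw [pack k z, distl_aux hdistl, ← pack (fun u v => k u v * b) z]
  refine ⟨?_, ?_, ?_, ?_⟩
  · -- associativity
    intro f g h
    funext x
    simp only [pconv, keyl, key]
    apply le_antisymm
    · refine iSup_le fun y => iSup_le fun z => iSup_le fun h1 =>
        iSup_le fun a => iSup_le fun b => iSup_le fun h2 => ?_
      obtain ⟨h1D, h1e⟩ := h1
      obtain ⟨h2D, h2e⟩ := h2
      subst h2e
      have hb := (hiff a b z).mpr ⟨h2D, h1D⟩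
      have hx : x = mul a (mul b z) := by rw [h1e, hassocM a b z h2D h1D]
      refine le_iSup_of_le a (le_iSup_of_le (mul b z) (le_iSup_of_le ⟨hb.2, hx⟩
        (le_iSup_of_le b (le_iSup_of_le z (le_iSup_of_le ⟨hb.1, rfl⟩ ?_)))))
      exact le_of_eq (mul_assoc _ _ _)
    · refine iSup_le fun y => iSup_le fun z => iSup_le fun h1 =>
        iSup_le fun u => iSup_le fun v => iSup_le fun h2 => ?_
      obtain ⟨h1D, h1e⟩ := h1
      obtain ⟨h2D, h2e⟩ := h2
      subst h2e
      have hb := (hiff y u v).mp ⟨h2D, h1D⟩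
      have hx : x = mul (mul y u) v := by
        rw [h1e, hassocM y u v hb.1 hb.2]
      refine le_iSup_of_le (mul y u) (le_iSup_of_le v (le_iSup_of_le ⟨hb.2, hx⟩
        (le_iSup_of_le y (le_iSup_of_le u (le_iSup_of_le ⟨hb.1, rfl⟩ ?_)))))
      exact le_of_eq (mul_assoc _ _ _).symm
  · -- left sup distributivity
    intro F g
    funext x
    have eL : pconv mul D (sSup F) g x
        = ⨆ y, ⨆ z, ⨆ (_ : D y z ∧ x = mul y z), ⨆ f : F, (f : M → Q) y * g z := by
      simp only [pconv, sSup_apply]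
      exact iSup_congr fun y => iSup_congr fun z => iSup_congr fun h1 => distl_aux hdistl _ _
    rw [eL]
    simp only [iSup_apply, pconv]
    apply le_antisymm
    · refine iSup_le fun y => iSup_le fun z => iSup_le fun h1 => iSup_le fun f => ?_
      exact le_iSup_of_le (f : M → Q) (le_iSup_of_le f.2 (le_iSup_of_le y
        (le_iSup_of_le z (le_iSup_of_le h1 le_rfl))))
    · refine iSup_le fun f => iSup_le fun hf => iSup_le fun y => iSup_le fun z =>
        iSup_le fun h1 => ?_
      exact le_iSup_of_le y (le_iSup_of_le z (le_iSup_of_le h1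
        (le_iSup_of_le ⟨f, hf⟩ le_rfl)))
  · -- right sup distributivity
    intro f G hG
    haveI : Nonempty G := hG.to_subtype
    funext x
    have eL : pconv mul D f (sSup G) x
        = ⨆ y, ⨆ z, ⨆ (_ : D y z ∧ x = mul y z), ⨆ g : G, f y * (g : M → Q) z := by
      simp only [pconv, sSup_apply]
      exact iSup_congr fun y => iSup_congr fun z => iSup_congr fun h1 => distr_aux hdistr _ _
    rw [eL]
    simp only [iSup_apply, pconv]
    apply le_antisymm
    · refine iSup_le fun y => iSup_le fun z => iSup_le fun h1 => iSup_le fun g => ?_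
      exact le_iSup_of_le (g : M → Q) (le_iSup_of_le g.2 (le_iSup_of_le y
        (le_iSup_of_le z (le_iSup_of_le h1 le_rfl))))
    · refine iSup_le fun g => iSup_le fun hg => iSup_le fun y => iSup_le fun z =>
        iSup_le fun h1 => ?_
      exact le_iSup_of_le y (le_iSup_of_le z (le_iSup_of_le h1
        (le_iSup_of_le ⟨g, hg⟩ le_rfl)))
  · -- left unit
    intro h1 h2 f
    funext x
    simp only [pconv]
    apply le_antisymm
    · refine iSup_le fun y => iSup_le fun z => iSup_le fun hc => ?_
      obtain ⟨hD, he⟩ := hc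
      by_cases hy : y ∈ E
      · obtain ⟨e, heE, heD, hem⟩ := hlu z
        have hDye : D y (mul e z) := hem.symm ▸ hD
        have hye : D y e := ((hiff y e z).mp ⟨heD, hDye⟩).1
        have hyee : y = e := hEu y hy e heE hye
        subst hyee
        have hxz : x = z := he.trans hem
        simp [hy, h1, hxz]
      · simp [hy, botmul]
    · obtain ⟨e, heE, heD, hem⟩ := hlu x
      refine le_iSup_of_le e (le_iSup_of_le x (le_iSup_of_le ⟨heD, hem.symm⟩ ?_))
      simp [heE, h1]
end

section
/- Let S(ℝ) = {(i, j) ∈ ℝ × ℝ | i ≤ j} be the set of closed real segments. For f, g : S(ℝ) → ℝ≥0∞ define the min-plus convolution (f ∗ g) (i, j) = ⨅ {f (i, k) + g (k, j) | i ≤ k ∧ k ≤ j}, and define e : S(ℝ) → ℝ≥0∞ by e (i, j) = 0 if i = j and e (i, j) = ⊤ (= ∞) otherwise. Then ∗ is associative, and e is a two-sided unit: e ∗ f = f = f ∗ e for all f : S(ℝ) → ℝ≥0∞. -/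
open scoped ENNReal Classical

/-- The closed real segments: pairs `(i, j)` of reals with `i ≤ j`. -/
def RSeg : Type := {p : ℝ × ℝ // p.1 ≤ p.2}

/-- Min-plus convolution on the incidence algebra of real segments:
`(f ∗ g) (i, j) = ⨅ {f (i, k) + g (k, j) | i ≤ k ≤ j}`. -/
noncomputable def mconv (f g : RSeg → ℝ≥0∞) : RSeg → ℝ≥0∞ :=
  fun s => ⨅ (k : ℝ) (h : s.val.1 ≤ k ∧ k ≤ s.val.2),
    f ⟨(s.val.1, k), h.1⟩ + g ⟨(k, s.val.2), h.2⟩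

/-- The unit: `0` on point segments, `⊤ = ∞` elsewhere. -/
noncomputable def munit : RSeg → ℝ≥0∞ :=
  fun s => if s.val.1 = s.val.2 then 0 else ⊤

theorem duration_quantale :
    (∀ f g h : RSeg → ℝ≥0∞, mconv (mconv f g) h = mconv f (mconv g h)) ∧
    (∀ f : RSeg → ℝ≥0∞, mconv munit f = f ∧ mconv f munit = f) := by
  constructor
  · intro f g h
    funext s
    obtain ⟨⟨i, j⟩, hij⟩ := s
    simp only [mconv, ENNReal.iInf_add, ENNReal.add_iInf]
    apply le_antisymm
    · refine le_iInf fun m => le_iInf fun hm => le_iInf fun k => le_iInf fun hk => ?_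
      refine iInf_le_of_le k (iInf_le_of_le ⟨hm.1.trans hk.1, hk.2⟩
        (iInf_le_of_le m (iInf_le_of_le ⟨hm.1, hk.1⟩ ?_)))
      rw [add_assoc]
    · refine le_iInf fun k => le_iInf fun hk => le_iInf fun m => le_iInf fun hm => ?_
      refine iInf_le_of_le m (iInf_le_of_le ⟨hm.1, hm.2.trans hk.2⟩
        (iInf_le_of_le k (iInf_le_of_le ⟨hm.2, hk.2⟩ ?_)))
      rw [add_assoc]
  · intro f
    constructor
    · funext s
      obtain ⟨⟨i, j⟩, hij⟩ := s
      simp only [mconv, munit]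
      apply le_antisymm
      · exact iInf_le_of_le i (iInf_le_of_le ⟨le_refl i, hij⟩ (by simp))
      · refine le_iInf fun k => le_iInf fun hk => ?_
        by_cases hik : i = k
        · subst hik; simp
        · simp [hik]
    · funext s
      obtain ⟨⟨i, j⟩, hij⟩ := s
      simp only [mconv, munit]
      apply le_antisymm
      · exact iInf_le_of_le j (iInf_le_of_le ⟨hij, le_refl j⟩ (by simp))
      · refine le_iInf fun k => le_iInf fun hk => ?_
        by_cases hkj : k = j
        · subst hkj; simp
        · simp [hkj]
end
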